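/- Suppose p ≤ ln(2)/2 and define Δu(θ,p) = θ·ln(θ/p) − θ + p − (θ − 1/2)·ln(2) for θ ∈ [1/2, 2p]. Then Δu(1/2, p) > 0 and Δu(2p, p) ≥ 0, and Δu is strictly decreasing in θ on (1/2, 2p); consequently Δu(θ,p) ≥ 0 for all θ ∈ [1/2, 2p]. -/

import Mathlib

open Real Set

theorem low_price_regime_all_switch (p : ℝ) (hp : 0 < p) (hp' : p ≤ Real.log 2 / 2) :
    let Δu : ℝ → ℝ := fun θ => θ * Real.log (θ / p) - θ + p - (θ - 1 / 2) * Real.log 2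
    Δu (1 / 2) > 0 ∧ Δu (2 * p) ≥ 0 ∧
    StrictAntiOn Δu (Ioo (1 / 2 : ℝ) (2 * p)) ∧
    ∀ θ ∈ Icc (1 / 2 : ℝ) (2 * p), 0 ≤ Δu θ := by
  intro Δu
  have hp0 : p ≠ 0 := ne_of_gt hp
  have hlog2 : Real.log 2 < 1 := lt_trans Real.log_two_lt_d9 (by norm_num)
  have h2p1 : 2 * p < 1 := by linarith
  have h1 : Δu (1 / 2) > 0 := by
    have hlt : Real.log (2 * p) < 2 * p - 1 :=
      Real.log_lt_sub_one_of_pos (by linarith) (by linarith)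
    show (1/2 : ℝ) * Real.log ((1/2)/p) - 1/2 + p - (1/2 - 1/2) * Real.log 2 > 0
    have heq : (1/2 : ℝ) / p = (2*p)⁻¹ := by field_simp
    rw [heq, Real.log_inv]
    nlinarith
  have h2 : Δu (2 * p) ≥ 0 := by
    show 2*p * Real.log ((2*p)/p) - (2*p) + p - (2*p - 1/2) * Real.log 2 ≥ 0
    have heq : (2*p)/p = 2 := by field_simp
    rw [heq]; nlinarith
  have hderivAt : ∀ θ : ℝ, 0 < θ →
      HasDerivAt Δu (Real.log θ - Real.log p - Real.log 2) θ := by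
    intro θ hθ
    have hg : HasDerivAt
        (fun x : ℝ => x * (Real.log x - Real.log p) - x + p - (x - 1/2) * Real.log 2)
        (Real.log θ - Real.log p - Real.log 2) θ := by
      have h1 : HasDerivAt (fun x : ℝ => x * Real.log x) (Real.log θ + 1) θ :=
        Real.hasDerivAt_mul_log (ne_of_gt hθ)
      have hid : HasDerivAt (fun x : ℝ => x) 1 θ := hasDerivAt_id θ
      have h3 := (((h1.sub (hid.mul_const (Real.log p))).sub hid).add_const p).sub
        ((hid.sub_const (1/2)).mul_const (Real.log 2))
      refine (h3.congr_deriv (by ring)).congr_of_eventuallyEq (Filter.Eventually.of_forall fun x => ?_)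
      simp only [Pi.sub_apply, Pi.add_apply]; ring
    apply hg.congr_of_eventuallyEq
    filter_upwards [Ioi_mem_nhds hθ] with x hx
    show x * Real.log (x / p) - x + p - (x - 1/2) * Real.log 2 = _
    rw [Real.log_div (ne_of_gt hx) hp0]
  have hcont : ContinuousOn Δu (Icc (1/2 : ℝ) (2*p)) := by
    have hlog : ContinuousOn (fun x : ℝ => Real.log (x / p)) (Icc (1/2 : ℝ) (2*p)) := by
      apply ContinuousOn.log ((continuousOn_id).div_const p)
      intro x hx
      have : (1/2 : ℝ) ≤ x := hx.1
      positivity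
    exact (((continuousOn_id.mul hlog).sub continuousOn_id).add continuousOn_const).sub
      ((continuousOn_id.sub continuousOn_const).mul continuousOn_const)
  have hanti : StrictAntiOn Δu (Icc (1/2 : ℝ) (2*p)) := by
    apply strictAntiOn_of_deriv_neg (convex_Icc _ _) hcont
    intro x hx
    rw [interior_Icc] at hx
    have hx0 : 0 < x := lt_trans (by norm_num) hx.1
    rw [(hderivAt x hx0).deriv]
    have : Real.log x < Real.log (2 * p) := Real.log_lt_log hx0 hx.2
    rw [Real.log_mul (by norm_num) hp0] at this
    linarith
  refine ⟨h1, h2, hanti.mono Ioo_subset_Icc_self, ?_⟩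
  rintro θ ⟨hθ1, hθ2⟩
  rcases eq_or_lt_of_le hθ2 with h | h
  · rw [h]; exact h2
  · have h2pm : (2*p) ∈ Icc (1/2 : ℝ) (2*p) := ⟨le_trans hθ1 hθ2, le_refl _⟩
    have := hanti ⟨hθ1, hθ2⟩ h2pm h
    linarith
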